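/- If λ > 1, then the equation θ = 1 - e^{-θλ} has exactly one solution θ in the open interval (0,1), and 0 is also a solution; hence the largest solution θ_λ of θ - (1 - e^{-θλ}) = 0 satisfies 0 < θ_λ < 1. -/

import Mathlib

/-- For `λ > 1`, the equation `θ = 1 - e^{-θλ}` has exactly one solution in `(0,1)`,
and `θ = 0` is also a solution; hence the largest solution `θ_λ` lies in `(0,1)`. -/
theorem unique_positive_root (lam : ℝ) (hlam : 1 < lam) :
    (∃! θ : ℝ, θ ∈ Set.Ioo (0 : ℝ) 1 ∧ θ = 1 - Real.exp (-θ * lam)) ∧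
    (0 : ℝ) = 1 - Real.exp (-(0 : ℝ) * lam) := by
  have hlam0 : (0:ℝ) < lam := by linarith
  constructor
  · -- uniqueness key: no two roots 0 < a < b
    have key : ∀ a b : ℝ, 0 < a → a < b → a = 1 - Real.exp (-a * lam) →
        b = 1 - Real.exp (-b * lam) → False := by
      intro a b ha hab hfa hfb
      have hb : 0 < b := ha.trans hab
      set t : ℝ := a / b with ht
      have ht0 : 0 < t := div_pos ha hb
      have ht1 : t < 1 := (div_lt_one hb).2 hab
      have htb : t * b = a := div_mul_cancel₀ a hb.ne'
      have hne : (0:ℝ) ≠ -b * lam := by nlinarith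
      have hconv := strictConvexOn_exp.2 (Set.mem_univ (0:ℝ)) (Set.mem_univ (-b*lam)) hne
        (by linarith : (0:ℝ) < 1 - t) ht0 (by ring)
      simp only [smul_eq_mul, mul_zero, zero_add, Real.exp_zero, mul_one] at hconv
      have he : t * (-b * lam) = -a * lam := by rw [← htb]; ring
      rw [he] at hconv
      nlinarith [hconv]
    -- existence via IVT
    set c : ℝ := (lam - 1) / (2 * lam) with hc
    have hc0 : 0 < c := div_pos (by linarith) (by linarith)
    have hc1 : c < 1 := by rw [div_lt_one (by linarith)]; linarith
    have hcont : ContinuousOn (fun θ : ℝ => 1 - Real.exp (-θ * lam) - θ) (Set.Icc c 1) := by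
      fun_prop
    have hf1 : (fun θ : ℝ => 1 - Real.exp (-θ * lam) - θ) 1 < 0 := by
      simp only
      have := Real.exp_pos (-1 * lam)
      linarith
    have hfc : 0 < (fun θ : ℝ => 1 - Real.exp (-θ * lam) - θ) c := by
      simp only
      have h1 : 1 + c * lam < Real.exp (c * lam) := by
        have := Real.add_one_lt_exp (x := c * lam) (by positivity : (0:ℝ) < c * lam).ne'
        linarith
      have hpos : (0:ℝ) < 1 + c * lam := by positivity
      have h2 : Real.exp (-c * lam) < 1 / (1 + c * lam) := by
        rw [neg_mul, Real.exp_neg, inv_eq_one_div]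
        exact div_lt_div_of_pos_left one_pos hpos h1
      have hclam : c * lam = (lam - 1) / 2 := by
        rw [hc]; field_simp
      have h3 : c + 1 / (1 + c * lam) < 1 := by
        rw [hclam, hc]
        rw [div_add_div _ _ (ne_of_gt (by linarith : (0:ℝ) < 2 * lam))
          (ne_of_gt (by linarith : (0:ℝ) < 1 + (lam - 1) / 2)),
          div_lt_one (by nlinarith : (0:ℝ) < 2 * lam * (1 + (lam - 1) / 2))]
        nlinarith [sq_nonneg (lam - 1)]
      linarith
    have hsub := intermediate_value_Ioo' hc1.le hcont
    have hmem : (0:ℝ) ∈ Set.Ioo ((fun θ : ℝ => 1 - Real.exp (-θ * lam) - θ) 1)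
        ((fun θ : ℝ => 1 - Real.exp (-θ * lam) - θ) c) := ⟨hf1, hfc⟩
    obtain ⟨θ, hθmem, hθ⟩ := hsub hmem
    simp only at hθ
    refine ⟨θ, ⟨⟨hc0.trans hθmem.1, hθmem.2⟩, by linarith⟩, ?_⟩
    intro y ⟨⟨hy0, hy1⟩, hy⟩
    rcases lt_trichotomy y θ with h | h | h
    · exact absurd (key y θ hy0 h hy (by linarith)) (fun f => f)
    · exact h
    · exact absurd (key θ y (hc0.trans hθmem.1) h (by linarith) hy) (fun f => f)
  · simp
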